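/- Let G_k denote the set of permutations w ∈ S_n with exactly k descents such that, writing D(w) = {d_1 < ⋯ < d_k} and J_s = {w(d_{s-1}+1),...,w(d_s)} (with d_0=0, d_{k+1}=n), the longest element w_0 (given by w_0(i) = n+1-i) lies in the coset (S_{J_1} × ⋯ × S_{J_{k+1}})·w. Then the map sending a composition a = (a_1,...,a_{k+1}) of n to the permutation w(a) whose one-line notation is the concatenation of the increasing runs (n-d_1+1,...,n), (n-d_2+1,...,n-d_1), ..., (1,...,n-d_k) — where d_s = a_1 + ⋯ + a_s — is a bijection from (k+1)-part compositions of n to G_k. In particular |G_k| = C(n-1, k). -/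

import Mathlib

/-- The descent pairs of `w`: pairs of adjacent positions (p, p+1) with w(p) > w(p+1). -/
def desPairs {n : ℕ} (w : Equiv.Perm (Fin n)) : Finset (Fin n × Fin n) :=
  Finset.univ.filter (fun p : Fin n × Fin n => (p.1 : ℕ) + 1 = (p.2 : ℕ) ∧ w p.2 < w p.1)

/-- The number of descents of `w`. -/
def desCount {n : ℕ} (w : Equiv.Perm (Fin n)) : ℕ := (desPairs w).card

/-- The index of the descent block of `w` containing position `p`. -/
def blockIdx {n : ℕ} (w : Equiv.Perm (Fin n)) (p : Fin n) : ℕ :=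
  ((desPairs w).filter (fun q => q.1 < p)).card

/-- `v` lies in the Young subgroup S_{J_1} × ⋯ × S_{J_{k+1}} of the descent
blocks of `w`. -/
def isYoung {n : ℕ} (w v : Equiv.Perm (Fin n)) : Prop :=
  ∀ y : Fin n, blockIdx w (w⁻¹ (v y)) = blockIdx w (w⁻¹ y)

/-- `w ∈ G_k`: `w` has `k` descents and the longest element `w₀` (with
w₀(i) = n+1-i, i.e. 0-indexed (w₀ x) + x + 1 = n) lies in the coset
(S_{J_1} × ⋯ × S_{J_{k+1}})·w. -/
def GkMem (n k : ℕ) (w : Equiv.Perm (Fin n)) : Prop :=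
  desCount w = k ∧ ∃ v : Equiv.Perm (Fin n), isYoung w v ∧
    ∀ x : Fin n, (((v * w) x : ℕ) + (x : ℕ) + 1 = n)

/-- The smallest cut point of `D ∪ {n}` strictly above position `p`. -/
noncomputable def upcut (n : ℕ) (D : Finset ℕ) (p : ℕ) : ℕ :=
  sInf {d : ℕ | (d ∈ D ∨ d = n) ∧ p < d}

/-- The largest cut point of `D ∪ {0}` at most `p`. -/
noncomputable def downcut (D : Finset ℕ) (p : ℕ) : ℕ :=
  sSup {d : ℕ | (d ∈ D ∨ d = 0) ∧ d ≤ p}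

/-- `w` is the permutation `w(a)` associated to the composition `a` of `n` with
cut set `D`: its one-line notation is the concatenation of the increasing runs
(n-d_1+1,…,n), (n-d_2+1,…,n-d_1), …, (1,…,n-d_k); equivalently (0-indexed)
w(p) + d_{s+1} + d_s = n + p where d_s ≤ p < d_{s+1} are the adjacent cuts. -/
noncomputable def isWa (n : ℕ) (D : Finset ℕ) (w : Equiv.Perm (Fin n)) : Prop :=
  ∀ p : Fin n, (w p : ℕ) + upcut n D (p : ℕ) + downcut D (p : ℕ) = n + (p : ℕ)


section aux
variable {n : ℕ} {D : Finset ℕ} {p q : ℕ}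

lemma dset_ne (D : Finset ℕ) (p : ℕ) :
    Set.Nonempty {d : ℕ | (d ∈ D ∨ d = 0) ∧ d ≤ p} :=
  ⟨0, Or.inr rfl, Nat.zero_le p⟩

lemma dset_bdd (D : Finset ℕ) (p : ℕ) :
    BddAbove {d : ℕ | (d ∈ D ∨ d = 0) ∧ d ≤ p} :=
  ⟨p, fun _ hd => hd.2⟩

lemma uset_ne (D : Finset ℕ) (hp : p < n) :
    Set.Nonempty {d : ℕ | (d ∈ D ∨ d = n) ∧ p < d} :=
  ⟨n, Or.inr rfl, hp⟩

lemma downcut_le (D : Finset ℕ) (p : ℕ) : downcut D p ≤ p :=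
  csSup_le (dset_ne D p) fun _ hd => hd.2

lemma downcut_mem (D : Finset ℕ) (p : ℕ) : downcut D p ∈ D ∨ downcut D p = 0 :=
  (Nat.sSup_mem (dset_ne D p) (dset_bdd D p)).1

lemma le_downcut {d : ℕ} (h : d ∈ D ∨ d = 0) (hdp : d ≤ p) : d ≤ downcut D p :=
  le_csSup (dset_bdd D p) ⟨h, hdp⟩

lemma lt_upcut (D : Finset ℕ) (hp : p < n) : p < upcut n D p :=
  (Nat.sInf_mem (uset_ne D hp)).2

lemma upcut_mem (D : Finset ℕ) (hp : p < n) : upcut n D p ∈ D ∨ upcut n D p = n :=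
  (Nat.sInf_mem (uset_ne D hp)).1

lemma upcut_le_n (D : Finset ℕ) (hp : p < n) : upcut n D p ≤ n :=
  Nat.sInf_le ⟨Or.inr rfl, hp⟩

lemma upcut_le_of {d : ℕ} (h : d ∈ D ∨ d = n) (hpd : p < d) : upcut n D p ≤ d :=
  Nat.sInf_le ⟨h, hpd⟩

end aux

section aux2
variable {n : ℕ} {D : Finset ℕ} {p q : ℕ}

/-- same-block lemma -/
lemma cuts_eq (hp : p < n) (h1 : downcut D p ≤ q) (h2 : q < upcut n D p) :
    downcut D q = downcut D p ∧ upcut n D q = upcut n D p := by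
  have hun : upcut n D p ≤ n := upcut_le_n D hp
  have hq : q < n := lt_of_lt_of_le h2 hun
  have hdp : downcut D p ≤ p := downcut_le D p
  constructor
  · apply le_antisymm
    · rcases downcut_mem D q with h | h
      · by_cases hle : downcut D q ≤ p
        · exact le_downcut (Or.inl h) hle
        · exfalso
          have := upcut_le_of (D := D) (n := n) (Or.inl h) (lt_of_not_ge hle)
          have := downcut_le D q
          omega
      · omega
    · exact le_downcut (downcut_mem D p) h1
  · apply le_antisymm
    · exact upcut_le_of (upcut_mem D hp) h2
    · have hlt : p < upcut n D q := by
        by_contra hle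
        push_neg at hle
        rcases upcut_mem D hq with h | h
        · have := le_downcut (D := D) (Or.inl h) hle
          have := lt_upcut (n := n) D hq
          omega
        · omega
      exact upcut_le_of (upcut_mem D hq) hlt

lemma cuts_eq_of_card' (hp : p < n) (hq : q < n) (hpq : p ≤ q)
    (h : (D.filter (fun d => d ≤ p)).card = (D.filter (fun d => d ≤ q)).card) :
    downcut D p = downcut D q ∧ upcut n D p = upcut n D q := by
  have hsub : D.filter (fun d => d ≤ p) ⊆ D.filter (fun d => d ≤ q) := by
    intro d hd
    simp only [Finset.mem_filter] at *
    exact ⟨hd.1, hd.2.trans hpq⟩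
  have heq := Finset.eq_of_subset_of_card_le hsub (le_of_eq h.symm)
  have key : ∀ d ∈ D, d ≤ q → d ≤ p := by
    intro d hd hdq
    have : d ∈ D.filter (fun d => d ≤ q) := Finset.mem_filter.mpr ⟨hd, hdq⟩
    rw [← heq] at this
    exact (Finset.mem_filter.mp this).2
  constructor
  · apply le_antisymm
    · exact le_downcut (downcut_mem D p) ((downcut_le D p).trans hpq)
    · rcases downcut_mem D q with h' | h'
      · exact le_downcut (Or.inl h') (key _ h' (downcut_le D q))
      · omega
  · apply le_antisymm
    · exact upcut_le_of (upcut_mem D hq) (lt_of_le_of_lt hpq (lt_upcut D hq))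
    · have hlt : q < upcut n D p := by
        by_contra hle
        push_neg at hle
        rcases upcut_mem D hp with h' | h'
        · have := key _ h' hle
          have := lt_upcut (n := n) D hp
          omega
        · omega
      exact upcut_le_of (upcut_mem D hp) hlt

lemma cuts_eq_of_card (hp : p < n) (hq : q < n)
    (h : (D.filter (fun d => d ≤ p)).card = (D.filter (fun d => d ≤ q)).card) :
    downcut D p = downcut D q ∧ upcut n D p = upcut n D q := by
  rcases le_total p q with hpq | hpq
  · exact cuts_eq_of_card' hp hq hpq h
  · exact ⟨(cuts_eq_of_card' hq hp hpq h.symm).1.symm, (cuts_eq_of_card' hq hp hpq h.symm).2.symm⟩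

lemma filter_le_downcut (D : Finset ℕ) (p : ℕ) :
    D.filter (fun d => d ≤ p) = D.filter (fun d => d ≤ downcut D p) := by
  ext d
  simp only [Finset.mem_filter, and_congr_right_iff]
  intro hd
  exact ⟨fun h => le_downcut (Or.inl hd) h, fun h => h.trans (downcut_le D p)⟩

end aux2


section wa
variable {n : ℕ} {D : Finset ℕ}

noncomputable def waFun (n : ℕ) (D : Finset ℕ) (p : Fin n) : Fin n :=
  ⟨n + (p : ℕ) - upcut n D (p : ℕ) - downcut D (p : ℕ), by
    have h2 := lt_upcut D p.isLt
    omega⟩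

lemma waFun_spec (n : ℕ) (D : Finset ℕ) (p : Fin n) :
    ((waFun n D p : ℕ)) + upcut n D (p : ℕ) + downcut D (p : ℕ) = n + (p : ℕ) := by
  have h1 := downcut_le D (p : ℕ)
  have h2 := lt_upcut D p.isLt
  have h3 := upcut_le_n D p.isLt
  simp only [waFun]
  omega

lemma waFun_inj (n : ℕ) (D : Finset ℕ) : Function.Injective (waFun n D) := by
  intro p q hpq
  have hp := waFun_spec n D p
  have hq := waFun_spec n D q
  have hval : ((waFun n D p : ℕ)) = ((waFun n D q : ℕ)) := by rw [hpq]
  have hdp := downcut_le D (p : ℕ)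
  have hdq := downcut_le D (q : ℕ)
  have hup := lt_upcut D p.isLt
  have huq := lt_upcut D q.isLt
  have hun := upcut_le_n D p.isLt
  have hunq := upcut_le_n D q.isLt
  -- key: downcuts are equal
  have hdd : downcut D (p : ℕ) = downcut D (q : ℕ) := by
    by_contra hne
    rcases Nat.lt_or_ge (downcut D (p : ℕ)) (downcut D (q : ℕ)) with hlt | hge
    · -- downcut q > p, downcut q ∈ D, upcut p ≤ downcut q
      have h1 : (p : ℕ) < downcut D (q : ℕ) := by
        by_contra hle
        push_neg at hle
        have := le_downcut (downcut_mem D (q : ℕ)) hle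
        omega
      have h2 : downcut D (q : ℕ) ∈ D := by
        rcases downcut_mem D (q : ℕ) with h | h
        · exact h
        · omega
      have h3 := upcut_le_of (n := n) (Or.inl h2) h1
      omega
    · have hlt : downcut D (q : ℕ) < downcut D (p : ℕ) := by omega
      have h1 : (q : ℕ) < downcut D (p : ℕ) := by
        by_contra hle
        push_neg at hle
        have := le_downcut (downcut_mem D (p : ℕ)) hle
        omega
      have h2 : downcut D (p : ℕ) ∈ D := by
        rcases downcut_mem D (p : ℕ) with h | h
        · exact h
        · omega
      have h3 := upcut_le_of (n := n) (Or.inl h2) h1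
      omega
  -- same upcuts
  have huu : upcut n D (p : ℕ) = upcut n D (q : ℕ) := by
    have h1 : (p : ℕ) < upcut n D (q : ℕ) := by
      by_contra hle
      push_neg at hle
      rcases upcut_mem D q.isLt with h | h
      · have := le_downcut (D := D) (Or.inl h) hle
        omega
      · omega
    have h2 : (q : ℕ) < upcut n D (p : ℕ) := by
      by_contra hle
      push_neg at hle
      rcases upcut_mem D p.isLt with h | h
      · have := le_downcut (D := D) (Or.inl h) hle
        omega
      · omega
    exact le_antisymm (upcut_le_of (upcut_mem D q.isLt) h1) (upcut_le_of (upcut_mem D p.isLt) h2)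
  apply Fin.ext
  omega

noncomputable def waPerm (n : ℕ) (D : Finset ℕ) : Equiv.Perm (Fin n) :=
  Equiv.ofBijective _ ((Finite.injective_iff_bijective).mp (waFun_inj n D))

lemma waPerm_apply (n : ℕ) (D : Finset ℕ) (p : Fin n) : waPerm n D p = waFun n D p := rfl

lemma waPerm_isWa (n : ℕ) (D : Finset ℕ) : isWa n D (waPerm n D) :=
  fun p => waFun_spec n D p

lemma isWa_unique {n : ℕ} {D : Finset ℕ} {w w' : Equiv.Perm (Fin n)}
    (h : isWa n D w) (h' : isWa n D w') : w = w' := by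
  apply Equiv.ext
  intro p
  apply Fin.ext
  have := h p
  have := h' p
  omega

end wa


section des
variable {n : ℕ} {D : Finset ℕ} {w : Equiv.Perm (Fin n)}

lemma mem_desPairs {q : Fin n × Fin n} :
    q ∈ desPairs w ↔ ((q.1 : ℕ) + 1 = (q.2 : ℕ) ∧ ((w q.2 : ℕ) < (w q.1 : ℕ))) := by
  unfold desPairs
  rw [Finset.mem_filter]
  simp only [Finset.mem_univ, true_and, Fin.lt_def]

/-- the descent set of any w, as a finset of cut positions -/
def desSet {n : ℕ} (w : Equiv.Perm (Fin n)) : Finset ℕ :=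
  (desPairs w).image (fun q => ((q.2 : Fin n) : ℕ))

lemma desPairs_injOn :
    Set.InjOn (fun q : Fin n × Fin n => ((q.2 : Fin n) : ℕ)) (desPairs w) := by
  intro a ha b hb hab
  simp only at hab
  have h1 := (mem_desPairs.mp ha).1
  have h2 := (mem_desPairs.mp hb).1
  have e2 : a.2 = b.2 := Fin.ext hab
  have e1 : a.1 = b.1 := Fin.ext (by omega)
  exact Prod.ext e1 e2

lemma desSet_card : (desSet w).card = desCount w :=
  Finset.card_image_of_injOn desPairs_injOn

lemma desSet_sub (hn : 1 ≤ n) : desSet w ⊆ Finset.Icc 1 (n - 1) := by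
  intro d hd
  simp only [desSet, Finset.mem_image] at hd
  obtain ⟨q, hq, rfl⟩ := hd
  have h1 := (mem_desPairs.mp hq).1
  have h2 := (q.2).isLt
  simp only [Finset.mem_Icc]
  omega

lemma blockIdx_eq_card (w : Equiv.Perm (Fin n)) (p : Fin n) :
    blockIdx w p = ((desSet w).filter (fun d => d ≤ (p : ℕ))).card := by
  unfold blockIdx
  apply Finset.card_bij (fun q _ => ((q.2 : Fin n) : ℕ))
  · intro q hq
    rw [Finset.mem_filter] at hq
    obtain ⟨hq1, hq2⟩ := hq
    have h1 := (mem_desPairs.mp hq1).1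
    rw [Fin.lt_def] at hq2
    simp only [Finset.mem_filter]
    refine ⟨Finset.mem_image.mpr ⟨q, hq1, rfl⟩, by omega⟩
  · intro a ha b hb hab
    rw [Finset.mem_filter] at ha hb
    exact desPairs_injOn ha.1 hb.1 hab
  · intro d hd
    rw [Finset.mem_filter] at hd
    obtain ⟨hd1, hd2⟩ := hd
    obtain ⟨q, hq, rfl⟩ := Finset.mem_image.mp hd1
    have h1 := (mem_desPairs.mp hq).1
    refine ⟨q, Finset.mem_filter.mpr ⟨hq, ?_⟩, rfl⟩
    rw [Fin.lt_def]
    omega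

/-- descents of a permutation satisfying `isWa` are exactly `D`. -/
lemma isWa_desSet (hn : 1 ≤ n) (hD : D ⊆ Finset.Icc 1 (n - 1)) (hw : isWa n D w) :
    desSet w = D := by
  have hDn : ∀ d ∈ D, 1 ≤ d ∧ d < n := by
    intro d hd
    have := Finset.mem_Icc.mp (hD hd)
    omega
  ext d
  simp only [desSet, Finset.mem_image]
  constructor
  · rintro ⟨q, hq, rfl⟩
    obtain ⟨h1, h2⟩ := mem_desPairs.mp hq
    by_contra hnd
    have hp1 : ((q.1 : Fin n) : ℕ) < n := (q.1).isLt
    have hp2 : ((q.2 : Fin n) : ℕ) < n := (q.2).isLt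
    have hlt := lt_upcut D hp1
    have hub : ((q.1 : Fin n) : ℕ) + 1 < upcut n D ((q.1 : Fin n) : ℕ) := by
      rcases upcut_mem D hp1 with h | h
      · have hne : upcut n D ((q.1 : Fin n) : ℕ) ≠ ((q.2 : Fin n) : ℕ) :=
          fun he => hnd (he ▸ h)
        omega
      · omega
    have hcuts := cuts_eq (q := ((q.2 : Fin n) : ℕ)) hp1
      (le_trans (downcut_le D _) (by omega)) (by omega)
    have hw1 := hw q.1
    have hw2 := hw q.2
    have hc1 := hcuts.1
    have hc2 := hcuts.2
    omega
  · intro hd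
    have hd1 : 1 ≤ d := (hDn d hd).1
    have hd2 : d < n := (hDn d hd).2
    refine ⟨(⟨d - 1, by omega⟩, ⟨d, hd2⟩), mem_desPairs.mpr ⟨by simp; omega, ?_⟩, by simp⟩
    simp only
    have hdd : downcut D d = d := le_antisymm (downcut_le D d) (le_downcut (Or.inl hd) le_rfl)
    have hud1 : upcut n D (d - 1) = d := by
      have h1 := upcut_le_of (n := n) (Or.inl hd) (by omega : d - 1 < d)
      have h2 := lt_upcut (n := n) D (by omega : d - 1 < n)
      omega
    have hw1 := hw ⟨d - 1, by omega⟩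
    have hw2 := hw ⟨d, hd2⟩
    simp only [Fin.val_mk] at hw1 hw2
    have hda := downcut_le D (d - 1)
    have hua := lt_upcut (n := n) D hd2
    omega

end des


section young
variable {n : ℕ} {D : Finset ℕ}

lemma isWa_blockIdx (hn : 1 ≤ n) (hD : D ⊆ Finset.Icc 1 (n - 1)) {w : Equiv.Perm (Fin n)}
    (hw : isWa n D w) (p : Fin n) :
    blockIdx w p = (D.filter (fun d => d ≤ (p : ℕ))).card := by
  rw [blockIdx_eq_card, isWa_desSet hn hD hw]

lemma run_le {w : Equiv.Perm (Fin n)}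
    (hAsc : ∀ p q : Fin n, (p : ℕ) + 1 = (q : ℕ) → ((q : ℕ) ∉ D) → (w p : ℕ) < (w q : ℕ))
    (p q : Fin n) (hpq : (p : ℕ) ≤ (q : ℕ)) (hb : (q : ℕ) < upcut n D (p : ℕ)) :
    (w p : ℕ) + ((q : ℕ) - (p : ℕ)) ≤ (w q : ℕ) := by
  obtain ⟨m, hm⟩ : ∃ m, (q : ℕ) = (p : ℕ) + m := ⟨(q : ℕ) - (p : ℕ), by omega⟩
  induction m generalizing q with
  | zero =>
    have hq : q = p := Fin.ext (by omega)
    subst hq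
    omega
  | succ m ih =>
    have hq'lt : (p : ℕ) + m < n := by have := q.isLt; omega
    have hih := ih ⟨(p : ℕ) + m, hq'lt⟩ (by simp) (by simp; omega) (by simp)
    have hstep : (p : ℕ) + m + 1 ∉ D := by
      intro hmem
      have := upcut_le_of (n := n) (Or.inl hmem) (by omega : (p : ℕ) < (p : ℕ) + m + 1)
      omega
    have hqd : (q : ℕ) ∉ D := by
      have hq1 : (q : ℕ) = (p : ℕ) + m + 1 := by omega
      rw [hq1]; exact hstep
    have hasc := hAsc ⟨(p : ℕ) + m, hq'lt⟩ q (by simp; omega) hqd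
    simp only [Fin.val_mk] at hih hasc
    omega

lemma waPerm_GkMem (hn : 1 ≤ n) (hD : D ⊆ Finset.Icc 1 (n - 1)) {k : ℕ} (hk : D.card = k) :
    GkMem n k (waPerm n D) := by
  set w := waPerm n D with hwdef
  have hw : isWa n D w := waPerm_isWa n D
  constructor
  · rw [← desSet_card, isWa_desSet hn hD hw]
    exact hk
  · refine ⟨Fin.revPerm * w⁻¹, ?_, ?_⟩
    · intro y
      simp only [Equiv.Perm.mul_apply, Fin.revPerm_apply]
      set p := w⁻¹ y with hp
      have h1 : downcut D (p : ℕ) ≤ (p : ℕ) := downcut_le D _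
      have h2 : (p : ℕ) < upcut n D (p : ℕ) := lt_upcut D p.isLt
      have h3 : upcut n D (p : ℕ) ≤ n := upcut_le_n D p.isLt
      have hqlt : upcut n D (p : ℕ) + downcut D (p : ℕ) - 1 - (p : ℕ) < n := by omega
      set q : Fin n := ⟨upcut n D (p : ℕ) + downcut D (p : ℕ) - 1 - (p : ℕ), hqlt⟩ with hqdef
      have hqv : (q : ℕ) = upcut n D (p : ℕ) + downcut D (p : ℕ) - 1 - (p : ℕ) := rfl
      have hcuts := cuts_eq (n := n) (D := D) (p := (p : ℕ)) (q := (q : ℕ)) p.isLt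
        (by omega) (by omega)
      have hwq := hw q
      have hwp := hw p
      have hwqval : (w q : ℕ) = n - 1 - (p : ℕ) := by
        have hc1 := hcuts.1
        have hc2 := hcuts.2
        omega
      have hrev : w q = Fin.rev p := by
        apply Fin.ext
        rw [Fin.val_rev, hwqval]
        omega
      have hinv : w⁻¹ (Fin.rev p) = q := by
        rw [← hrev]
        exact w.symm_apply_apply q
      rw [hinv]
      rw [isWa_blockIdx hn hD hw q, isWa_blockIdx hn hD hw p,
        filter_le_downcut D (q : ℕ), filter_le_downcut D (p : ℕ), hcuts.1]
    · intro x
      have hcomp : (Fin.revPerm * w⁻¹) * w = Fin.revPerm (n := n) := by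
        rw [mul_assoc, inv_mul_cancel, mul_one]
      rw [hcomp]
      have := x.isLt
      rw [Fin.revPerm_apply, Fin.val_rev]
      omega

lemma GkMem_isWa {k : ℕ} (hn : 1 ≤ n) {w : Equiv.Perm (Fin n)} (hw : GkMem n k w) :
    isWa n (desSet w) w := by
  obtain ⟨hk, v, hY, hvw⟩ := hw
  set D := desSet w with hDdef
  have hAsc : ∀ p q : Fin n, (p : ℕ) + 1 = (q : ℕ) → ((q : ℕ) ∉ D) → (w p : ℕ) < (w q : ℕ) := by
    intro p q hpq hnd
    have hnotdes : (p, q) ∉ desPairs w := by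
      intro hmem
      exact hnd (Finset.mem_image.mpr ⟨(p, q), hmem, rfl⟩)
    simp only [mem_desPairs] at hnotdes
    push_neg at hnotdes
    have hle := hnotdes hpq
    have hne : (w p : ℕ) ≠ (w q : ℕ) := by
      intro h
      have h2 : p = q := w.injective (Fin.ext h)
      have h3 : (p : ℕ) = (q : ℕ) := congrArg Fin.val h2
      omega
    omega
  have hBlk : ∀ x : Fin n, ∀ hr : n - 1 - (w x : ℕ) < n,
      (D.filter (fun d => d ≤ (x : ℕ))).card =
      (D.filter (fun d => d ≤ n - 1 - (w x : ℕ))).card := by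
    intro x hr
    set r : Fin n := ⟨n - 1 - (w x : ℕ), hr⟩ with hrdef
    have hvwr := hvw r
    have hwx := (w x).isLt
    have hwr := (w r).isLt
    have hvr : v (w r) = w x := by
      apply Fin.ext
      have hmul : ((v * w) r : ℕ) = (v (w r) : ℕ) := by rw [Equiv.Perm.mul_apply]
      have hrv : (r : ℕ) = n - 1 - (w x : ℕ) := rfl
      omega
    have hYr := hY (w r)
    rw [hvr, Equiv.Perm.inv_def, Equiv.symm_apply_apply, Equiv.symm_apply_apply] at hYr
    rw [blockIdx_eq_card, blockIdx_eq_card] at hYr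
    exact hYr
  intro x
  have hxn := x.isLt
  have h1 : downcut D (x : ℕ) ≤ (x : ℕ) := downcut_le D _
  have h2 : (x : ℕ) < upcut n D (x : ℕ) := lt_upcut D x.isLt
  have h3 : upcut n D (x : ℕ) ≤ n := upcut_le_n D x.isLt
  set d := downcut D (x : ℕ) with hdh
  set u := upcut n D (x : ℕ) with huh
  set pd : Fin n := ⟨d, by omega⟩ with hpd
  set pu : Fin n := ⟨u - 1, by omega⟩ with hpu
  have hcd := cuts_eq (n := n) (D := D) (p := (x : ℕ)) (q := d) x.isLt (by omega) (by omega)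
  have hcu := cuts_eq (n := n) (D := D) (p := (x : ℕ)) (q := u - 1) x.isLt (by omega) (by omega)
  have harg1 : (pd : ℕ) ≤ (x : ℕ) := by simp only [hpd, Fin.val_mk]; omega
  have harg2 : (x : ℕ) < upcut n D (pd : ℕ) := by
    have hh := hcd.2
    simp only [hpd, Fin.val_mk]
    omega
  have harg3 : (x : ℕ) ≤ (pu : ℕ) := by simp only [hpu, Fin.val_mk]; omega
  have harg4 : (pu : ℕ) < upcut n D (x : ℕ) := by simp only [hpu, Fin.val_mk]; omega
  have run1 := run_le hAsc pd x harg1 harg2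
  have run2 := run_le hAsc x pu harg3 harg4
  have hwpd := (w pd).isLt
  have hwpu := (w pu).isLt
  have hb1 := hBlk pd (by omega)
  have hb2 := hBlk pu (by omega)
  have hpdv : (pd : ℕ) = d := rfl
  have hpuv : (pu : ℕ) = u - 1 := rfl
  rw [hpdv] at hb1
  rw [hpuv] at hb2
  have hc1 := cuts_eq_of_card (n := n) (by omega : d < n) (by omega : n - 1 - (w pd : ℕ) < n) hb1
  have hc2 := cuts_eq_of_card (n := n) (by omega : u - 1 < n) (by omega : n - 1 - (w pu : ℕ) < n) hb2
  -- lower bound on w pd : n - 1 - w pd < u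
  have e2 : n - 1 - (w pd : ℕ) < u := by
    have := lt_upcut (n := n) D (by omega : n - 1 - (w pd : ℕ) < n)
    have hcc := hc1.2
    have := hcd.2
    omega
  -- upper bound on w pu : d ≤ n - 1 - w pu
  have e3 : d ≤ n - 1 - (w pu : ℕ) := by
    have := downcut_le D (n - 1 - (w pu : ℕ))
    have hcc := hc2.1
    have := hcu.1
    omega
  have run1' : (w pd : ℕ) + ((x : ℕ) - d) ≤ (w x : ℕ) := by rw [hpdv] at run1; exact run1
  have run2' : (w x : ℕ) + ((u - 1) - (x : ℕ)) ≤ (w pu : ℕ) := by rw [hpuv] at run2; exact run2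
  omega

end young

/-- The map a ↦ w(a) is a bijection from (k+1)-part compositions of n
(equivalently, k-element subsets of [n-1]) onto G_k; in particular
|G_k| = C(n-1, k). -/
theorem stmt12 (n k : ℕ) (hn : 1 ≤ n) :
    (∃ e : {D : Finset ℕ // D ∈ Finset.powersetCard k (Finset.Icc 1 (n - 1))} ≃
          {w : Equiv.Perm (Fin n) // GkMem n k w},
        ∀ D, isWa n D.1 (e D).1)
    ∧ Nat.card {w : Equiv.Perm (Fin n) // GkMem n k w} = Nat.choose (n - 1) k := by
  classical
  have hF : ∀ D : {D : Finset ℕ // D ∈ Finset.powersetCard k (Finset.Icc 1 (n - 1))},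
      GkMem n k (waPerm n D.1) := by
    rintro ⟨D, hD⟩
    rw [Finset.mem_powersetCard] at hD
    exact waPerm_GkMem hn hD.1 hD.2
  set F : {D : Finset ℕ // D ∈ Finset.powersetCard k (Finset.Icc 1 (n - 1))} →
      {w : Equiv.Perm (Fin n) // GkMem n k w} := fun D => ⟨waPerm n D.1, hF D⟩ with hFdef
  have hInj : Function.Injective F := by
    rintro ⟨D, hD⟩ ⟨D', hD'⟩ h
    rw [Finset.mem_powersetCard] at hD hD'
    simp only [hFdef, Subtype.mk.injEq] at h
    apply Subtype.ext
    simp only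
    rw [← isWa_desSet hn hD.1 (waPerm_isWa n D), ← isWa_desSet hn hD'.1 (waPerm_isWa n D'), h]
  have hSurj : Function.Surjective F := by
    rintro ⟨w, hw⟩
    have hwa := GkMem_isWa hn hw
    have hmem : desSet w ∈ Finset.powersetCard k (Finset.Icc 1 (n - 1)) := by
      rw [Finset.mem_powersetCard]
      exact ⟨desSet_sub hn, by rw [desSet_card, hw.1]⟩
    refine ⟨⟨desSet w, hmem⟩, ?_⟩
    apply Subtype.ext
    simp only [hFdef]
    exact isWa_unique (waPerm_isWa n (desSet w)) hwa
  have hBij : Function.Bijective F := ⟨hInj, hSurj⟩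
  refine ⟨⟨Equiv.ofBijective F hBij, fun D => waPerm_isWa n D.1⟩, ?_⟩
  rw [← Nat.card_congr (Equiv.ofBijective F hBij)]
  rw [Nat.card_eq_fintype_card, Fintype.card_coe, Finset.card_powersetCard, Nat.card_Icc]
  have he : n - 1 + 1 - 1 = n - 1 := by omega
  rw [he]
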